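/- arXiv:1810.04073 — 4 statements merged into one kernel-verified Lean document; each statement's English description precedes it below -/
import Mathlib

section
/- Assume F : Y → ℝ ∪ {+∞} and G : Q → ℝ ∪ {+∞} are proper, convex and lower semicontinuous; that there exists u₀ ∈ Y with F(u₀) < ∞ such that G is finite and continuous at Λu₀; and that F(v) + G(Λv) → +∞ as ‖v‖ → ∞. Then there exists a minimizer u ∈ Y of the primal functional Jᵖ(v) = F(v) + G(Λv) over Y, there exists a maximizer σ ∈ Q* of the dual functional Jᵈ(τ) = −F*(Λ*τ) − G*(−τ) over Q*, the strong duality Jᵖ(u) = Jᵈ(σ) holds, and the extremal relations F(u) + F*(Λ*σ) − ⟨Λ*σ, u⟩ = 0 and G(Λu) + G*(−σ) + ⟨σ, Λu⟩ = 0 hold. -/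
open Filter Topology

open Metric Set NormedSpace Bornology

theorem weakly_closed_of_convex_closed {Y : Type*} [NormedAddCommGroup Y] [NormedSpace ℝ Y]
    {A : Set Y} (hAc : Convex ℝ A) (hA : IsClosed A) :
    IsClosed (toWeakSpace ℝ Y '' A) := by
  rw [← isOpen_compl_iff]
  rw [isOpen_iff_mem_nhds]
  intro x hx
  have hx' : (toWeakSpace ℝ Y).symm x ∉ A := by
    intro h
    exact hx ⟨_, h, by simp⟩
  obtain ⟨f, u, hfx, hfA⟩ := geometric_hahn_banach_point_closed hAc hA hx'
  have hcont : Continuous fun z : WeakSpace ℝ Y => f ((toWeakSpace ℝ Y).symm z) :=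
    WeakBilin.eval_continuous ((topDualPairing ℝ Y).flip) f
  have hopen : IsOpen {z : WeakSpace ℝ Y | f ((toWeakSpace ℝ Y).symm z) < u} :=
    isOpen_lt hcont continuous_const
  apply Filter.mem_of_superset (hopen.mem_nhds hfx)
  intro z hz hmem
  obtain ⟨y, hy, rfl⟩ := hmem
  simp only [Set.mem_setOf_eq, LinearEquiv.symm_apply_apply] at hz
  exact lt_asymm hz (hfA y hy)

theorem weakly_compact_ball {Y : Type*} [NormedAddCommGroup Y] [NormedSpace ℝ Y]
    (hYrefl : Function.Surjective (NormedSpace.inclusionInDoubleDual ℝ Y))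
    (R : ℝ) : IsCompact (toWeakSpace ℝ Y '' (closedBall (0 : Y) R)) := by
  have hsurj : Function.Surjective (NormedSpace.inclusionInDoubleDualLi ℝ (E := Y)) := hYrefl
  let e : Y ≃ₗᵢ[ℝ] (StrongDual ℝ (StrongDual ℝ Y)) :=
    LinearIsometryEquiv.ofSurjective (NormedSpace.inclusionInDoubleDualLi ℝ) hsurj
  let ψ : WeakDual ℝ (StrongDual ℝ Y) → WeakSpace ℝ Y := fun x => toWeakSpace ℝ Y (e.symm x)
  have hψ : Continuous ψ := by
    apply WeakBilin.continuous_of_continuous_eval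
    intro f
    have heq : (fun a : WeakDual ℝ (StrongDual ℝ Y) => ((topDualPairing ℝ Y).flip) (ψ a) f)
        = fun x : WeakDual ℝ (StrongDual ℝ Y) => x f := by
      ext x
      have h1 : f (e.symm x) = (e (e.symm x)) f := by
        have : ∀ y : Y, e y f = f y := fun y => rfl
        rw [this]
      exact h1.trans (by exact congrArg (fun g : StrongDual ℝ (StrongDual ℝ Y) => g f) (e.apply_symm_apply x))
    rw [heq]
    exact WeakDual.eval_continuous f
  have hcomp : IsCompact (WeakDual.toStrongDual ⁻¹' closedBall (0 : StrongDual ℝ (StrongDual ℝ Y)) R) :=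
    WeakDual.isCompact_closedBall (0 : StrongDual ℝ (StrongDual ℝ Y)) R
  have himage : ψ '' (WeakDual.toStrongDual ⁻¹' closedBall 0 R)
      = toWeakSpace ℝ Y '' (closedBall (0 : Y) R) := by
    ext z
    constructor
    · rintro ⟨x, hx, rfl⟩
      refine ⟨e.symm x, ?_, rfl⟩
      simp only [mem_closedBall, dist_zero_right] at hx ⊢
      exact (e.symm.norm_map (WeakDual.toStrongDual x)).trans_le ((mem_closedBall_zero_iff (E := StrongDual ℝ (StrongDual ℝ Y)) (a := WeakDual.toStrongDual x)).mp hx)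
    · rintro ⟨y, hy, rfl⟩
      refine ⟨e y, ?_, by simp [ψ]⟩
      simp only [mem_preimage, mem_closedBall, dist_zero_right] at hy ⊢
      exact (mem_closedBall_zero_iff (E := StrongDual ℝ (StrongDual ℝ Y)) (a := e y)).mpr ((e.norm_map y).trans_le hy)
  rw [← himage]
  exact hcomp.image hψ

theorem exists_min_of_reflexive {Y : Type*} [NormedAddCommGroup Y] [NormedSpace ℝ Y]
    (hYrefl : Function.Surjective (NormedSpace.inclusionInDoubleDual ℝ Y))
    (J : Y → EReal)
    (hconv : ∀ c : ℝ, Convex ℝ {v : Y | J v ≤ (c : EReal)})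
    (hclosed : ∀ c : ℝ, IsClosed {v : Y | J v ≤ (c : EReal)})
    (hcoer : Tendsto J (Bornology.cobounded Y) atTop)
    (v₀ : Y) (hv₀ : J v₀ < ⊤) :
    ∃ u : Y, ∀ v : Y, J u ≤ J v := by
  obtain ⟨r, hr⟩ : ∃ r : ℝ, J v₀ ≤ (r : EReal) := by
    rcases eq_or_ne (J v₀) ⊥ with h | h
    · exact ⟨0, by simp [h]⟩
    · exact ⟨(J v₀).toReal, le_of_eq (EReal.coe_toReal hv₀.ne h).symm⟩
  set m : EReal := ⨅ v : Y, J v with hm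
  rcases lt_or_ge m (r : EReal) with hmr | hmr
  swap
  · exact ⟨v₀, fun v => le_trans (le_trans hr hmr) (iInf_le _ v)⟩
  -- the sublevel set at level `r` is bounded
  have hb : IsBounded {v : Y | J v ≤ (r : EReal)} := by
    have hev : ∀ᶠ v in Bornology.cobounded Y, (((r + 1 : ℝ)) : EReal) ≤ J v :=
      hcoer.eventually_ge_atTop _
    have hcob : IsCobounded {v : Y | (((r + 1 : ℝ)) : EReal) ≤ J v} := hev
    have hbc : IsBounded {v : Y | (((r + 1 : ℝ)) : EReal) ≤ J v}ᶜ := hcob.compl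
    refine hbc.subset fun v hv => ?_
    simp only [Set.mem_compl_iff, Set.mem_setOf_eq, not_le]
    exact lt_of_le_of_lt hv (by exact_mod_cast lt_add_one r)
  obtain ⟨R, hR⟩ : ∃ R, {v : Y | J v ≤ (r : EReal)} ⊆ closedBall (0 : Y) R :=
    hb.subset_closedBall 0
  -- directed family of nonempty weakly compact sets
  let I := {c : ℝ // m < (c : EReal) ∧ c ≤ r}
  have hIne : Nonempty I := ⟨⟨r, hmr, le_rfl⟩⟩
  let T : I → Set (WeakSpace ℝ Y) := fun c => toWeakSpace ℝ Y '' {v : Y | J v ≤ (c.1 : EReal)}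
  have hTsub : ∀ c : I, {v : Y | J v ≤ (c.1 : EReal)} ⊆ closedBall (0 : Y) R := fun c v hv =>
    hR (show J v ≤ (r : EReal) from le_trans hv (by exact_mod_cast c.2.2))
  have hTclosed : ∀ c : I, IsClosed (T c) := fun c =>
    weakly_closed_of_convex_closed (hconv c.1) (hclosed c.1)
  have hTcompact : ∀ c : I, IsCompact (T c) := fun c =>
    (weakly_compact_ball hYrefl R).of_isClosed_subset (hTclosed c)
      (Set.image_mono (hTsub c))
  have hTne : ∀ c : I, (T c).Nonempty := by
    intro c
    obtain ⟨v, hv⟩ : ∃ v : Y, J v < (c.1 : EReal) := iInf_lt_iff.mp c.2.1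
    exact ⟨toWeakSpace ℝ Y v, v, hv.le, rfl⟩
  have hTdir : Directed (· ⊇ ·) T := by
    intro c d
    refine ⟨⟨min c.1 d.1, ?_, ?_⟩, ?_, ?_⟩
    · rcases min_choice c.1 d.1 with h | h <;> rw [h]
      exacts [c.2.1, d.2.1]
    · exact le_trans (min_le_left _ _) c.2.2
    · exact Set.image_mono fun v hv => show J v ≤ (c.1 : EReal) from
        le_trans hv (by exact_mod_cast min_le_left c.1 d.1)
    · exact Set.image_mono fun v hv => show J v ≤ (d.1 : EReal) from
        le_trans hv (by exact_mod_cast min_le_right c.1 d.1)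
  obtain ⟨w, hw⟩ := IsCompact.nonempty_iInter_of_directed_nonempty_isCompact_isClosed
    T hTdir hTne hTcompact hTclosed
  simp only [Set.mem_iInter] at hw
  set u : Y := (toWeakSpace ℝ Y).symm w with hu
  have hJu : ∀ c : I, J u ≤ (c.1 : EReal) := by
    intro c
    obtain ⟨y, hy, hyw⟩ := hw c
    have : y = u := by rw [hu, ← hyw, LinearEquiv.symm_apply_apply]
    rwa [← this]
  refine ⟨u, fun v => le_trans ?_ (iInf_le _ v)⟩
  by_contra hlt
  push_neg at hlt
  obtain ⟨c', hc'1, hc'2⟩ := exists_between (lt_min hlt hmr)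
  have hc'bot : c' ≠ ⊥ := fun h => absurd (h ▸ hc'1) (by simp)
  have hc'top : c' ≠ ⊤ := (lt_of_lt_of_le hc'2 (min_le_right _ _)).trans_le le_top |>.ne
  set c : ℝ := c'.toReal with hc
  have hcc : (c : EReal) = c' := EReal.coe_toReal hc'top hc'bot
  have hcI : m < (c : EReal) ∧ c ≤ r := by
    constructor
    · rw [hcc]; exact hc'1
    · have : (c : EReal) ≤ (r : EReal) := by
        rw [hcc]; exact hc'2.le.trans (min_le_right _ _)
      exact_mod_cast this
  have h1 : J u ≤ (c : EReal) := hJu ⟨c, hcI⟩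
  have h2 : (c : EReal) < J u := by rw [hcc]; exact lt_of_lt_of_le hc'2 (min_le_left _ _)
  exact absurd h1 (not_le.mpr h2)

lemma ereal_exists_real {a : EReal} (h1 : a ≠ ⊥) (h2 : a ≠ ⊤) : ∃ x : ℝ, a = (x : EReal) := by
  induction a with
  | bot => exact absurd rfl h1
  | coe x => exact ⟨x, rfl⟩
  | top => exact absurd rfl h2

lemma ereal_finite_of_add_lt_top {a b : EReal} (ha : a ≠ ⊥) (hb : b ≠ ⊥) (h : a + b < ⊤) :
    (∃ x : ℝ, a = (x : EReal)) ∧ (∃ y : ℝ, b = (y : EReal)) := by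
  constructor
  · refine ereal_exists_real ha fun hat => ?_
    rw [hat, EReal.top_add_of_ne_bot hb] at h
    exact absurd h (lt_irrefl _)
  · refine ereal_exists_real hb fun hbt => ?_
    rw [hbt, add_comm, EReal.top_add_of_ne_bot ha] at h
    exact absurd h (lt_irrefl _)

lemma ereal_real_of_between {a : EReal} {x y : ℝ} (h1 : (x : EReal) ≤ a) (h2 : a ≤ (y : EReal)) :
    ∃ r : ℝ, a = (r : EReal) :=
  ereal_exists_real (fun h => by simp [h] at h1) (fun h => by simp [h] at h2)

set_option maxHeartbeats 1000000 in
/-- Statement 2 (Fenchel duality / existence of primal and dual optimizers with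
strong duality and extremal relations), for proper convex lsc `F`, `G` on
reflexive Banach spaces with a coercive primal functional. -/
theorem fenchel_duality_exists
    {Y Q : Type*} [NormedAddCommGroup Y] [NormedSpace ℝ Y] [CompleteSpace Y]
    [NormedAddCommGroup Q] [NormedSpace ℝ Q] [CompleteSpace Q]
    (hYrefl : Function.Surjective (NormedSpace.inclusionInDoubleDual ℝ Y))
    (hQrefl : Function.Surjective (NormedSpace.inclusionInDoubleDual ℝ Q))
    (Lam : Y →L[ℝ] Q)
    (F : Y → EReal) (G : Q → EReal)
    -- `F` and `G` are proper (never `⊥`, not identically `⊤`)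
    (hFbot : ∀ y, F y ≠ ⊥) (hFdom : ∃ y, F y < ⊤)
    (hGbot : ∀ q, G q ≠ ⊥) (hGdom : ∃ q, G q < ⊤)
    -- `F` and `G` are convex
    (hFconv : ∀ x y : Y, ∀ t : ℝ, 0 ≤ t → t ≤ 1 →
      F (t • x + (1 - t) • y) ≤ (t : EReal) * F x + ((1 - t : ℝ) : EReal) * F y)
    (hGconv : ∀ p q : Q, ∀ t : ℝ, 0 ≤ t → t ≤ 1 →
      G (t • p + (1 - t) • q) ≤ (t : EReal) * G p + ((1 - t : ℝ) : EReal) * G q)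
    -- `F` and `G` are lower semicontinuous
    (hFlsc : LowerSemicontinuous F) (hGlsc : LowerSemicontinuous G)
    -- there is `u₀` with `F` finite at `u₀` and `G` finite and continuous at `Λ u₀`
    (u₀ : Y) (hFu₀ : F u₀ < ⊤) (hGu₀ : G (Lam u₀) < ⊤)
    (hGcont : ContinuousAt G (Lam u₀))
    -- coercivity: `F(v) + G(Λ v) → +∞` as `‖v‖ → ∞`
    (hcoer : Tendsto (fun v : Y => F v + G (Lam v)) (Bornology.cobounded Y) atTop) :
    -- conjugate functionals, primal and dual functionals
    let Fstar : StrongDual ℝ Y → EReal := fun p =>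
      ⨆ x ∈ {x : Y | F x < ⊤}, ((p x : EReal) - F x)
    let Gstar : StrongDual ℝ Q → EReal := fun p =>
      ⨆ q ∈ {q : Q | G q < ⊤}, ((p q : EReal) - G q)
    let Jp : Y → EReal := fun v => F v + G (Lam v)
    let Jd : StrongDual ℝ Q → EReal := fun τ =>
      -Fstar (ContinuousLinearMap.comp τ Lam) - Gstar (-τ)
    ∃ (u : Y) (σ : StrongDual ℝ Q),
      (∀ v : Y, Jp u ≤ Jp v) ∧
      (∀ τ : StrongDual ℝ Q, Jd τ ≤ Jd σ) ∧
      Jp u = Jd σ ∧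
      F u + Fstar (ContinuousLinearMap.comp σ Lam) - ((σ (Lam u) : ℝ) : EReal) = 0 ∧
      G (Lam u) + Gstar (-σ) + ((σ (Lam u) : ℝ) : EReal) = 0 := by
  intro Fstar Gstar Jp Jd
  obtain ⟨f₀, hf₀⟩ : ∃ x : ℝ, F u₀ = (x : EReal) := ereal_exists_real (hFbot u₀) hFu₀.ne
  obtain ⟨g₀, hg₀⟩ : ∃ x : ℝ, G (Lam u₀) = (x : EReal) := ereal_exists_real (hGbot _) hGu₀.ne
  -- `Jp` is lower semicontinuous with closed convex sublevel sets
  have hJplsc : LowerSemicontinuous Jp :=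
    hFlsc.add' (hGlsc.comp Lam.continuous)
      (fun x => EReal.continuousAt_add (Or.inr (hGbot _)) (Or.inl (hFbot _)))
  have hclosed : ∀ c : ℝ, IsClosed {v : Y | Jp v ≤ (c : EReal)} := by
    intro c
    rw [← isOpen_compl_iff, isOpen_iff_mem_nhds]
    intro x hx
    simp only [mem_compl_iff, mem_setOf_eq, not_le] at hx
    filter_upwards [hJplsc x _ hx] with y hy
    simp only [mem_compl_iff, mem_setOf_eq, not_le]
    exact hy
  have hconv : ∀ c : ℝ, Convex ℝ {v : Y | Jp v ≤ (c : EReal)} := by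
    intro c x hx y hy a b ha hb hab
    simp only [mem_setOf_eq, Jp] at hx hy ⊢
    obtain ⟨⟨fx, hfx⟩, ⟨gx, hgx⟩⟩ := ereal_finite_of_add_lt_top (hFbot x) (hGbot _)
      (lt_of_le_of_lt hx (EReal.coe_lt_top c))
    obtain ⟨⟨fy, hfy⟩, ⟨gy, hgy⟩⟩ := ereal_finite_of_add_lt_top (hFbot y) (hGbot _)
      (lt_of_le_of_lt hy (EReal.coe_lt_top c))
    have hba : b = 1 - a := by linarith
    have h1 := hFconv x y a ha (by linarith)
    have h2 := hGconv (Lam x) (Lam y) a ha (by linarith)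
    rw [hfx, hfy] at h1
    rw [hgx, hgy] at h2
    have hLam : Lam (a • x + b • y) = a • Lam x + (1 - a) • Lam y := by
      rw [map_add, map_smul, map_smul, hba]
    have hF : F (a • x + b • y) ≤ ((a * fx + (1 - a) * fy : ℝ) : EReal) := by
      rw [hba]
      convert h1 using 2 <;> push_cast <;> ring_nf <;> norm_cast
    have hG : G (Lam (a • x + b • y)) ≤ ((a * gx + (1 - a) * gy : ℝ) : EReal) := by
      rw [hLam]
      convert h2 using 2 <;> push_cast <;> ring_nf <;> norm_cast
    have hsum := add_le_add hF hG
    refine le_trans hsum ?_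
    rw [← EReal.coe_add]
    apply EReal.coe_le_coe_iff.mpr
    have hxc : fx + gx ≤ c := by
      have := hx; rw [hfx, hgx, ← EReal.coe_add] at this; exact_mod_cast this
    have hyc : fy + gy ≤ c := by
      have := hy; rw [hfy, hgy, ← EReal.coe_add] at this; exact_mod_cast this
    nlinarith [mul_le_mul_of_nonneg_left hxc ha, mul_le_mul_of_nonneg_left hyc (by linarith : (0:ℝ) ≤ 1 - a)]
  -- existence of a primal minimizer
  have hJpu₀ : Jp u₀ < ⊤ := by
    show F u₀ + G (Lam u₀) < ⊤
    rw [hf₀, hg₀, ← EReal.coe_add]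
    exact EReal.coe_lt_top _
  obtain ⟨u, hu⟩ := exists_min_of_reflexive hYrefl Jp hconv hclosed hcoer u₀ hJpu₀
  obtain ⟨⟨fu, hfu⟩, ⟨gu, hgu⟩⟩ := ereal_finite_of_add_lt_top (hFbot u) (hGbot _)
    (lt_of_le_of_lt (hu u₀) hJpu₀)
  set m : ℝ := fu + gu with hm
  have hJpu : Jp u = (m : EReal) := by
    show F u + G (Lam u) = _
    rw [hfu, hgu, ← EReal.coe_add]
  have hmin : ∀ v : Y, (m : EReal) ≤ F v + G (Lam v) := fun v => hJpu ▸ hu v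
  have hmf₀g₀ : m ≤ f₀ + g₀ := by
    have := hu u₀
    rw [hJpu] at this
    have : (m : EReal) ≤ ((f₀ + g₀ : ℝ) : EReal) := by
      refine le_trans this ?_
      show F u₀ + G (Lam u₀) ≤ _
      rw [hf₀, hg₀, ← EReal.coe_add]
    exact_mod_cast this
  -- the convex set used for separation
  set C : Set (Q × ℝ) := {p | ∃ v : Y, F v + G (Lam v + p.1) < (p.2 : EReal)} with hC
  have hCconv : Convex ℝ C := by
    rintro ⟨q1, t1⟩ ⟨v1, hv1⟩ ⟨q2, t2⟩ ⟨v2, hv2⟩ a b ha hb hab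
    obtain ⟨⟨s1, hs1⟩, ⟨r1, hr1⟩⟩ := ereal_finite_of_add_lt_top (hFbot v1) (hGbot _)
      (lt_of_lt_of_le hv1 le_top)
    obtain ⟨⟨s2, hs2⟩, ⟨r2, hr2⟩⟩ := ereal_finite_of_add_lt_top (hFbot v2) (hGbot _)
      (lt_of_lt_of_le hv2 le_top)
    have hba : b = 1 - a := by linarith
    refine ⟨a • v1 + b • v2, ?_⟩
    have hpt : Lam (a • v1 + b • v2) + (a • (q1, t1) + b • (q2, t2)).1
        = a • (Lam v1 + q1) + (1 - a) • (Lam v2 + q2) := by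
      simp only [Prod.smul_mk, Prod.mk_add_mk, map_add, map_smul, hba]
      module
    rw [hpt]
    have h1 := hFconv v1 v2 a ha (by linarith)
    have h2 := hGconv (Lam v1 + q1) (Lam v2 + q2) a ha (by linarith)
    rw [hs1, hs2] at h1
    rw [hr1, hr2] at h2
    have hF : F (a • v1 + b • v2) ≤ ((a * s1 + (1 - a) * s2 : ℝ) : EReal) := by
      rw [hba]
      convert h1 using 2 <;> (try push_cast) <;> (try ring)
    have hG : G (a • (Lam v1 + q1) + (1 - a) • (Lam v2 + q2))
        ≤ ((a * r1 + (1 - a) * r2 : ℝ) : EReal) := by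
      convert h2 using 2 <;> (try push_cast) <;> (try ring)
    refine lt_of_le_of_lt (add_le_add hF hG) ?_
    rw [← EReal.coe_add]
    have hst1 : s1 + r1 < t1 := by
      have := hv1; rw [hs1, hr1, ← EReal.coe_add] at this; exact_mod_cast this
    have hst2 : s2 + r2 < t2 := by
      have := hv2; rw [hs2, hr2, ← EReal.coe_add] at this; exact_mod_cast this
    show ((a * s1 + (1-a) * s2 + (a * r1 + (1-a) * r2) : ℝ) : EReal)
        < (((a • (q1, t1) + b • (q2, t2)).2 : ℝ) : EReal)
    have h2nd : (a • (q1, t1) + b • (q2, t2)).2 = a * t1 + (1 - a) * t2 := by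
      simp [hba]
    rw [h2nd]
    apply EReal.coe_lt_coe_iff.mpr
    rcases eq_or_lt_of_le ha with haz | hap
    · simp only [← haz]; ring_nf; linarith
    · nlinarith [mul_lt_mul_of_pos_left hst1 hap,
        mul_le_mul_of_nonneg_left hst2.le (by linarith : (0:ℝ) ≤ 1 - a)]
  -- a slab inside `C`
  have hlt : G (Lam u₀) < ((g₀ + 1 : ℝ) : EReal) := by
    rw [hg₀]; exact_mod_cast lt_add_one g₀
  have hnb : G ⁻¹' (Iio ((g₀ + 1 : ℝ) : EReal)) ∈ 𝓝 (Lam u₀) :=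
    hGcont (isOpen_Iio.mem_nhds hlt)
  obtain ⟨δ, hδpos, hδ⟩ := Metric.mem_nhds_iff.mp hnb
  set s₁ : ℝ := f₀ + g₀ + 2 with hs₁
  have hslab : (ball (0 : Q) δ) ×ˢ (Ioi s₁) ⊆ C := by
    rintro ⟨q, t⟩ ⟨hq, ht⟩
    refine ⟨u₀, ?_⟩
    have hq2 : Lam u₀ + q ∈ ball (Lam u₀) δ := by
      simp only [mem_ball] at hq ⊢
      simpa [dist_eq_norm] using hq
    have hG2 : G (Lam u₀ + q) < ((g₀ + 1 : ℝ) : EReal) := hδ hq2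
    have : F u₀ + G (Lam u₀ + q) ≤ ((f₀ + (g₀ + 1) : ℝ) : EReal) := by
      rw [hf₀, EReal.coe_add]
      exact add_le_add le_rfl hG2.le
    refine lt_of_le_of_lt this ?_
    apply EReal.coe_lt_coe_iff.mpr
    simp only [mem_Ioi] at ht
    simp only [hs₁] at ht
    linarith
  have hmemint : ∀ q : Q, ∀ t : ℝ, ‖q‖ < δ → s₁ < t → ((q, t) : Q × ℝ) ∈ interior C := by
    intro q t hq ht
    apply interior_maximal hslab (isOpen_ball.prod isOpen_Ioi)
    exact ⟨by simpa [mem_ball, dist_eq_norm] using hq, ht⟩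
  -- `(0, m)` is not in `C`
  have hnotmem : ((0 : Q), m) ∉ interior C := by
    intro hmem
    obtain ⟨v, hv⟩ := interior_subset hmem
    simp only [add_zero] at hv
    exact absurd hv (not_lt.mpr (hmin v))
  -- separation
  obtain ⟨φ, hφ⟩ := geometric_hahn_banach_open_point hCconv.interior isOpen_interior hnotmem
  -- extend the strict inequality on the interior to all of `C`
  have hp₀ : ((0 : Q), s₁ + 1) ∈ interior C := hmemint 0 (s₁+1) (by simpa using hδpos) (lt_add_one s₁)
  have hCsub : ∀ p ∈ C, φ p ≤ φ ((0 : Q), m) := by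
    intro p hp
    set p₀ : Q × ℝ := ((0 : Q), s₁ + 1) with hp₀def
    have hseq : ∀ n : ℕ, φ ((1/(n+1 : ℝ)) • p₀ + (1 - 1/(n+1 : ℝ)) • p) < φ ((0 : Q), m) := by
      intro n
      have hn1 : (0:ℝ) < 1/(n+1 : ℝ) := by positivity
      have hn2 : (0:ℝ) ≤ 1 - 1/(n+1 : ℝ) := by
        have h1n : (1:ℝ) ≤ (n:ℝ) + 1 := by
          have := Nat.cast_nonneg (α := ℝ) n; linarith
        have : 1/(n+1 : ℝ) ≤ 1 := by
          rw [div_le_one (by linarith)]; linarith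
        linarith
      exact hφ _ (hCconv.combo_interior_self_mem_interior hp₀ hp hn1 hn2 (by ring))
    have htend : Tendsto (fun n : ℕ => φ ((1/(n+1 : ℝ)) • p₀ + (1 - 1/(n+1 : ℝ)) • p)) atTop
        (𝓝 (φ p)) := by
      have h0 : Tendsto (fun n : ℕ => 1/(n+1 : ℝ)) atTop (𝓝 0) :=
        tendsto_one_div_add_atTop_nhds_zero_nat
      have harg : Tendsto (fun n : ℕ => (1/(n+1 : ℝ)) • p₀ + (1 - 1/(n+1 : ℝ)) • p) atTop
          (𝓝 ((0:ℝ) • p₀ + (1 - 0 : ℝ) • p)) := by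
        exact ((h0.smul_const p₀).add (((tendsto_const_nhds.sub h0)).smul_const p))
      simp only [zero_smul, sub_zero, one_smul, zero_add] at harg
      exact (φ.continuous.tendsto p).comp harg
    exact le_of_tendsto htend (Filter.Eventually.of_forall fun n => (hseq n).le)
  -- decompose the separating functional
  set a : ℝ := φ ((0 : Q), (1 : ℝ)) with ha
  set σ' : Q →L[ℝ] ℝ := φ.comp (ContinuousLinearMap.inl ℝ Q ℝ) with hσ'
  have hφeq : ∀ (q : Q) (t : ℝ), φ (q, t) = σ' q + t * a := by
    intro q t
    have hsplit : ((q, t) : Q × ℝ) = ((q, (0:ℝ)) : Q × ℝ) + t • (((0 : Q), (1 : ℝ)) : Q × ℝ) := by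
      simp
    rw [hsplit, map_add, map_smul]
    simp only [hσ', ContinuousLinearMap.comp_apply, ContinuousLinearMap.inl_apply]
    simp [smul_eq_mul, ha]
  have hkey : ∀ p ∈ C, σ' p.1 + p.2 * a ≤ m * a := by
    intro p hp
    have := hCsub p hp
    rw [show p = (p.1, p.2) from rfl, hφeq p.1 p.2, hφeq 0 m] at this
    simpa using this
  -- the vertical coefficient is negative
  have haneg : a < 0 := by
    have h1 := hφ _ hp₀
    rw [hφeq 0 (s₁+1), hφeq 0 m] at h1
    simp only [map_zero] at h1
    have hs1m : m < s₁ + 1 := by simp only [hs₁]; linarith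
    nlinarith
  have hane : a ≠ 0 := haneg.ne
  set σ : StrongDual ℝ Q := a⁻¹ • σ' with hσdef
  have hσ'eq : ∀ q : Q, σ' q = a * σ q := by
    intro q
    simp only [hσdef, ContinuousLinearMap.smul_apply, smul_eq_mul]
    field_simp
  -- the key pointwise inequality
  have hkeyR : ∀ (v : Y) (w : Q) (fv gw : ℝ), F v = (fv : EReal) → G w = (gw : EReal) →
      m - σ w + σ (Lam v) ≤ fv + gw := by
    intro v w fv gw hfv hgw
    by_contra hcon
    push_neg at hcon
    set t : ℝ := (fv + gw + (m - σ w + σ (Lam v))) / 2 with ht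
    have ht1 : fv + gw < t := by rw [ht]; linarith
    have ht2 : t < m - σ w + σ (Lam v) := by rw [ht]; linarith
    have hmem : ((w - Lam v, t) : Q × ℝ) ∈ C := by
      refine ⟨v, ?_⟩
      have : Lam v + (w - Lam v) = w := by abel
      rw [this, hfv, hgw, ← EReal.coe_add]
      exact_mod_cast ht1
    have hk := hkey _ hmem
    simp only [map_sub, hσ'eq] at hk
    linarith [hk, mul_lt_mul_of_neg_left ht2 haneg]
  -- conjugate values are finite
  have hAub : Fstar (ContinuousLinearMap.comp σ Lam) ≤ ((g₀ + σ (Lam u₀) - m : ℝ) : EReal) := by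
    apply iSup₂_le
    intro x hx
    obtain ⟨fx, hfx⟩ := ereal_exists_real (hFbot x) (ne_of_lt hx)
    rw [hfx]
    show ((σ (Lam x) : ℝ) : EReal) - (fx : EReal) ≤ _
    rw [← EReal.coe_sub]
    exact EReal.coe_le_coe_iff.mpr (by have := hkeyR x (Lam u₀) fx g₀ hfx hg₀; linarith)
  have hAlb : ((σ (Lam u₀) - f₀ : ℝ) : EReal) ≤ Fstar (ContinuousLinearMap.comp σ Lam) := by
    have h := le_iSup₂ (f := fun (x : Y) (_ : x ∈ {x : Y | F x < ⊤}) =>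
      (((ContinuousLinearMap.comp σ Lam) x : ℝ) : EReal) - F x) u₀ hFu₀
    rw [hf₀] at h
    simpa [Fstar, ← EReal.coe_sub] using h
  obtain ⟨α, hα⟩ := ereal_real_of_between hAlb hAub
  have hBub : Gstar (-σ) ≤ ((fu - m - σ (Lam u) : ℝ) : EReal) := by
    apply iSup₂_le
    intro w hw
    obtain ⟨gw, hgw⟩ := ereal_exists_real (hGbot w) (ne_of_lt hw)
    rw [hgw]
    show (((-σ) w : ℝ) : EReal) - (gw : EReal) ≤ _
    rw [← EReal.coe_sub]
    apply EReal.coe_le_coe_iff.mpr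
    simp only [ContinuousLinearMap.neg_apply]
    have := hkeyR u w fu gw hfu hgw
    linarith
  have hBlb : ((-(σ (Lam u₀)) - g₀ : ℝ) : EReal) ≤ Gstar (-σ) := by
    have h := le_iSup₂ (f := fun (w : Q) (_ : w ∈ {q : Q | G q < ⊤}) =>
      (((-σ) w : ℝ) : EReal) - G w) (Lam u₀) hGu₀
    rw [hg₀] at h
    simpa [Gstar, ← EReal.coe_neg, ← EReal.coe_sub] using h
  obtain ⟨β, hβ⟩ := ereal_real_of_between hBlb hBub
  -- strong duality inequalities
  have hβv : ∀ (v : Y) (fv : ℝ), F v = (fv : EReal) → β ≤ fv - m - σ (Lam v) := by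
    intro v fv hfv
    have hBv : Gstar (-σ) ≤ ((fv - m - σ (Lam v) : ℝ) : EReal) := by
      apply iSup₂_le
      intro w hw
      obtain ⟨gw, hgw⟩ := ereal_exists_real (hGbot w) (ne_of_lt hw)
      rw [hgw]
      show (((-σ) w : ℝ) : EReal) - (gw : EReal) ≤ _
      rw [← EReal.coe_sub]
      apply EReal.coe_le_coe_iff.mpr
      simp only [ContinuousLinearMap.neg_apply]
      have := hkeyR v w fv gw hfv hgw
      linarith
    rw [hβ] at hBv
    exact_mod_cast hBv
  have hαβ : α + β ≤ -m := by
    have hαv : Fstar (ContinuousLinearMap.comp σ Lam) ≤ ((-m - β : ℝ) : EReal) := by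
      apply iSup₂_le
      intro x hx
      obtain ⟨fx, hfx⟩ := ereal_exists_real (hFbot x) (ne_of_lt hx)
      rw [hfx]
      show ((σ (Lam x) : ℝ) : EReal) - (fx : EReal) ≤ _
      rw [← EReal.coe_sub]
      apply EReal.coe_le_coe_iff.mpr
      have := hβv x fx hfx
      linarith
    rw [hα] at hαv
    have : α ≤ -m - β := by exact_mod_cast hαv
    linarith
  have hαu : σ (Lam u) - fu ≤ α := by
    have h2 : ((σ (Lam u) - fu : ℝ) : EReal) ≤ Fstar (ContinuousLinearMap.comp σ Lam) := by
      have h := le_iSup₂ (f := fun (x : Y) (_ : x ∈ {x : Y | F x < ⊤}) =>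
        (((ContinuousLinearMap.comp σ Lam) x : ℝ) : EReal) - F x) u
        (show F u < ⊤ by rw [hfu]; exact EReal.coe_lt_top _)
      rw [hfu] at h
      simpa [Fstar, ← EReal.coe_sub] using h
    rw [hα] at h2
    exact_mod_cast h2
  have hβu : -(σ (Lam u)) - gu ≤ β := by
    have h2 : ((-(σ (Lam u)) - gu : ℝ) : EReal) ≤ Gstar (-σ) := by
      have h := le_iSup₂ (f := fun (w : Q) (_ : w ∈ {q : Q | G q < ⊤}) =>
        (((-σ) w : ℝ) : EReal) - G w) (Lam u)
        (show G (Lam u) < ⊤ by rw [hgu]; exact EReal.coe_lt_top _)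
      rw [hgu] at h
      simpa [Gstar, ← EReal.coe_neg, ← EReal.coe_sub] using h
    rw [hβ] at h2
    exact_mod_cast h2
  have hαeq : α = σ (Lam u) - fu := by simp only [hm] at hαβ; linarith
  have hβeq : β = -(σ (Lam u)) - gu := by simp only [hm] at hαβ; linarith
  -- weak duality
  have hJdle : ∀ τ : StrongDual ℝ Q, Jd τ ≤ (m : EReal) := by
    intro τ
    have hA'lb : ((τ (Lam u) - fu : ℝ) : EReal) ≤ Fstar (ContinuousLinearMap.comp τ Lam) := by
      have h := le_iSup₂ (f := fun (x : Y) (_ : x ∈ {x : Y | F x < ⊤}) =>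
        (((ContinuousLinearMap.comp τ Lam) x : ℝ) : EReal) - F x) u
        (show F u < ⊤ by rw [hfu]; exact EReal.coe_lt_top _)
      rw [hfu] at h
      simpa [Fstar, ← EReal.coe_sub] using h
    have hB'lb : ((-(τ (Lam u)) - gu : ℝ) : EReal) ≤ Gstar (-τ) := by
      have h := le_iSup₂ (f := fun (w : Q) (_ : w ∈ {q : Q | G q < ⊤}) =>
        (((-τ) w : ℝ) : EReal) - G w) (Lam u)
        (show G (Lam u) < ⊤ by rw [hgu]; exact EReal.coe_lt_top _)
      rw [hgu] at h
      simpa [Gstar, ← EReal.coe_neg, ← EReal.coe_sub] using h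
    show -Fstar (ContinuousLinearMap.comp τ Lam) - Gstar (-τ) ≤ (m : EReal)
    rcases eq_or_ne (Fstar (ContinuousLinearMap.comp τ Lam)) ⊤ with hAt | hAt
    · rw [hAt, EReal.neg_top, EReal.bot_sub]
      exact bot_le
    rcases eq_or_ne (Gstar (-τ)) ⊤ with hBt | hBt
    · rw [hBt, EReal.sub_top]
      exact bot_le
    have hA'bot : Fstar (ContinuousLinearMap.comp τ Lam) ≠ ⊥ := fun h => by
      rw [h, le_bot_iff] at hA'lb; exact EReal.coe_ne_bot _ hA'lb
    have hB'bot : Gstar (-τ) ≠ ⊥ := fun h => by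
      rw [h, le_bot_iff] at hB'lb; exact EReal.coe_ne_bot _ hB'lb
    obtain ⟨α', hα'⟩ := ereal_exists_real hA'bot hAt
    obtain ⟨β', hβ'⟩ := ereal_exists_real hB'bot hBt
    rw [hα', hβ', ← EReal.coe_neg, ← EReal.coe_sub]
    apply EReal.coe_le_coe_iff.mpr
    rw [hα'] at hA'lb
    rw [hβ'] at hB'lb
    have h1 : τ (Lam u) - fu ≤ α' := by exact_mod_cast hA'lb
    have h2 : -(τ (Lam u)) - gu ≤ β' := by exact_mod_cast hB'lb
    simp only [hm]
    linarith
  have hJdσ : Jd σ = (m : EReal) := by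
    show -Fstar (ContinuousLinearMap.comp σ Lam) - Gstar (-σ) = (m : EReal)
    rw [hα, hβ, ← EReal.coe_neg, ← EReal.coe_sub]
    apply congrArg
    rw [hαeq, hβeq, hm]
    ring
  refine ⟨u, σ, hu, ?_, ?_, ?_, ?_⟩
  · intro τ
    rw [hJdσ]
    exact hJdle τ
  · rw [hJpu, hJdσ]
  · show F u + Fstar (ContinuousLinearMap.comp σ Lam) - ((σ (Lam u) : ℝ) : EReal) = 0
    rw [hfu, hα, ← EReal.coe_add, ← EReal.coe_sub]
    rw [show ((0 : EReal)) = ((0 : ℝ) : EReal) from rfl]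
    apply congrArg
    rw [hαeq]; ring
  · show G (Lam u) + Gstar (-σ) + ((σ (Lam u) : ℝ) : EReal) = 0
    rw [hgu, hβ, ← EReal.coe_add, ← EReal.coe_add]
    rw [show ((0 : EReal)) = ((0 : ℝ) : EReal) from rfl]
    apply congrArg
    rw [hβeq]; ring
end

section
/- Let u ∈ K be a weak primal solution, σ ∈ M a weak dual solution, and assume there exists σ̄ ∈ M with R σ̄ = −Λ̃ u (in the elliptic application σ̄ = −𝒜Λu ∈ Σ_fg). Then the generalized Prager–Synge identity holds: for every v ∈ K and every τ ∈ M, ‖Λ̃(u−v)‖² + ‖R(σ−τ)‖² = 2(Jᵖ(v) − Jᵈ(τ)) = ‖Λ̃ v + R τ‖², i.e. the combined energy error |||(u−v, σ−τ)|||_c² equals twice the primal-dual gap. -/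
/-- generalized Prager–Synge identity. If `u ∈ K` is a weak primal
solution, `σ ∈ M` is a weak dual solution, and some `σ̄ ∈ M` satisfies
`R σ̄ = −Λ̃ u`, then for all `v ∈ K`, `τ ∈ M`:
`‖Λ̃(u−v)‖² + ‖R(σ−τ)‖² = 2(Jᵖ(v) − Jᵈ(τ)) = ‖Λ̃ v + R τ‖²`. -/
theorem generalized_prager_synge {V S H : Type*} [AddCommGroup V] [Module ℝ V]
    [AddCommGroup S] [Module ℝ S]
    [NormedAddCommGroup H] [InnerProductSpace ℝ H]
    (L : V →ₗ[ℝ] H) (R : S →ₗ[ℝ] H)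
    (a : V → V → ℝ) (ha : ∀ v w : V, a v w = (inner ℝ (L v) (L w) : ℝ))
    (b : S → S → ℝ) (hb : ∀ ρ τ : S, b ρ τ = (inner ℝ (R ρ) (R τ) : ℝ))
    (φ : V →ₗ[ℝ] ℝ) (ψ : S →ₗ[ℝ] ℝ)
    (V₀ : Submodule ℝ V) (S₀₀ : Submodule ℝ S) (u_g : V) (σ_fg : S)
    (K : Set V) (hK : K = {v : V | v - u_g ∈ V₀})
    (M : Set S) (hM : M = {τ : S | τ - σ_fg ∈ S₀₀})
    (Jp : V → ℝ) (hJp : ∀ v, Jp v = (1 / 2) * a v v - φ v)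
    (Jd : S → ℝ) (hJd : ∀ τ, Jd τ = -(1 / 2) * b τ τ + ψ τ)
    (hcompat : ∀ v ∈ K, ∀ τ ∈ M, (inner ℝ (L v) (R τ) : ℝ) = -φ v - ψ τ)
    (u : V) (hu : u ∈ K) (huweak : ∀ w ∈ V₀, a u w = φ w)
    (σ : S) (hσ : σ ∈ M) (hσweak : ∀ τ ∈ S₀₀, b σ τ = ψ τ)
    (hexact : ∃ σbar ∈ M, R σbar = -(L u)) :
    ∀ v ∈ K, ∀ τ ∈ M,
      ‖L (u - v)‖ ^ 2 + ‖R (σ - τ)‖ ^ 2 = 2 * (Jp v - Jd τ) ∧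
      2 * (Jp v - Jd τ) = ‖L v + R τ‖ ^ 2 := by
  obtain ⟨σbar, hσbarM, hσbarR⟩ := hexact
  intro v hv τ hτ
  -- membership facts
  have hvV : u - v ∈ V₀ := by
    rw [hK] at hu hv
    simpa using V₀.sub_mem hu hv
  have hτS : σ - τ ∈ S₀₀ := by
    rw [hM] at hσ hτ
    simpa using S₀₀.sub_mem hσ hτ
  have hbarS : σ - σbar ∈ S₀₀ := by
    rw [hM] at hσ hσbarM
    simpa using S₀₀.sub_mem hσ hσbarM
  -- scalar identities
  have e1 : (inner ℝ (L v) (R τ) : ℝ) = -φ v - ψ τ := hcompat v hv τ hτ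
  have e2 : (inner ℝ (L u) (L u) : ℝ) - inner ℝ (L u) (L v) = φ u - φ v := by
    have := huweak (u - v) hvV
    rw [ha] at this
    simp only [map_sub, inner_sub_right] at this
    simpa using this
  have e3 : (inner ℝ (R σ) (R σ) : ℝ) - inner ℝ (R σ) (R τ) = ψ σ - ψ τ := by
    have := hσweak (σ - τ) hτS
    rw [hb] at this
    simp only [map_sub, inner_sub_right] at this
    simpa using this
  have e6 : (inner ℝ (R σ) (R σ) : ℝ) - inner ℝ (R σ) (R σbar) = ψ σ - ψ σbar := by
    have := hσweak (σ - σbar) hbarS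
    rw [hb] at this
    simp only [map_sub, inner_sub_right] at this
    simpa using this
  have e4 : -(inner ℝ (L u) (L u) : ℝ) = -φ u - ψ σbar := by
    have := hcompat u hu σbar hσbarM
    rw [hσbarR, inner_neg_right] at this
    linarith [this]
  have e5 : (inner ℝ (L u) (R σ) : ℝ) = -φ u - ψ σ := hcompat u hu σ hσ
  have e7 : (inner ℝ (R σ) (R σbar) : ℝ) = -(inner ℝ (L u) (R σ) : ℝ) := by
    rw [hσbarR, inner_neg_right, real_inner_comm]
  -- norm expansions
  have n1 : ‖L (u - v)‖ ^ 2 =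
      (inner ℝ (L u) (L u) : ℝ) - 2 * inner ℝ (L u) (L v) + inner ℝ (L v) (L v) := by
    rw [map_sub]
    rw [@norm_sub_sq_real]
    rw [real_inner_self_eq_norm_sq, real_inner_self_eq_norm_sq]
  have n2 : ‖R (σ - τ)‖ ^ 2 =
      (inner ℝ (R σ) (R σ) : ℝ) - 2 * inner ℝ (R σ) (R τ) + inner ℝ (R τ) (R τ) := by
    rw [map_sub]
    rw [@norm_sub_sq_real]
    rw [real_inner_self_eq_norm_sq, real_inner_self_eq_norm_sq]
  have n3 : ‖L v + R τ‖ ^ 2 =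
      (inner ℝ (L v) (L v) : ℝ) + 2 * inner ℝ (L v) (R τ) + inner ℝ (R τ) (R τ) := by
    rw [@norm_add_sq_real]
    rw [real_inner_self_eq_norm_sq, real_inner_self_eq_norm_sq]
  have hgap : 2 * (Jp v - Jd τ) =
      (inner ℝ (L v) (L v) : ℝ) + 2 * inner ℝ (L v) (R τ) + inner ℝ (R τ) (R τ) := by
    rw [hJp, hJd, ha, hb, e1]; ring
  constructor
  · rw [n1, n2, hgap]
    linarith [e1, e2, e3, e4, e5, e6, e7]
  · rw [n3, hgap]
end

section
/- Define the Lagrangian L(v,τ) = Jᵖ(v) − (1/2)‖Λ̃ v + R τ‖² for v ∈ K and τ ∈ M. Let u ∈ K be a weak primal solution, σ ∈ M a weak dual solution, and assume there exists σ̄ ∈ M with R σ̄ = −Λ̃ u. Then (u,σ) is a saddle point of L on K × M, i.e. L(u,τ) ≤ L(u,σ) ≤ L(v,σ) for all v ∈ K and τ ∈ M, and moreover inf_{v∈K} Jᵖ(v) = Jᵖ(u) = L(u,σ) = Jᵈ(σ) = sup_{τ∈M} Jᵈ(τ). -/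
/-- with the Lagrangian `L(v,τ) = Jᵖ(v) − (1/2)‖Λ̃ v + R τ‖²`,
the pair `(u,σ)` of weak primal and dual solutions is a saddle point of the
Lagrangian on `K × M`, and
`inf_{v∈K} Jᵖ(v) = Jᵖ(u) = L(u,σ) = Jᵈ(σ) = sup_{τ∈M} Jᵈ(τ)`. -/
theorem lagrangian_saddle_point {V S H : Type*}
    [AddCommGroup V] [Module ℝ V] [AddCommGroup S] [Module ℝ S]
    [NormedAddCommGroup H] [InnerProductSpace ℝ H]
    (L : V →ₗ[ℝ] H) (R : S →ₗ[ℝ] H)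
    (a : V → V → ℝ) (ha : ∀ v w : V, a v w = (inner ℝ (L v) (L w) : ℝ))
    (b : S → S → ℝ) (hb : ∀ ρ τ : S, b ρ τ = (inner ℝ (R ρ) (R τ) : ℝ))
    (φ : V →ₗ[ℝ] ℝ) (ψ : S →ₗ[ℝ] ℝ)
    (V₀ : Submodule ℝ V) (S₀₀ : Submodule ℝ S) (u_g : V) (σ_fg : S)
    (K : Set V) (hK : K = {v : V | v - u_g ∈ V₀})
    (M : Set S) (hM : M = {τ : S | τ - σ_fg ∈ S₀₀})
    (Jp : V → ℝ) (hJp : ∀ v, Jp v = (1 / 2) * a v v - φ v)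
    (Jd : S → ℝ) (hJd : ∀ τ, Jd τ = -(1 / 2) * b τ τ + ψ τ)
    (hcompat : ∀ v ∈ K, ∀ τ ∈ M, (inner ℝ (L v) (R τ) : ℝ) = -φ v - ψ τ)
    (Lag : V → S → ℝ) (hLag : ∀ v τ, Lag v τ = Jp v - (1 / 2) * ‖L v + R τ‖ ^ 2)
    (u : V) (hu : u ∈ K) (huweak : ∀ w ∈ V₀, a u w = φ w)
    (σ : S) (hσ : σ ∈ M) (hσweak : ∀ τ ∈ S₀₀, b σ τ = ψ τ)
    (hexact : ∃ σbar ∈ M, R σbar = -(L u)) :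
    ((∀ τ ∈ M, Lag u τ ≤ Lag u σ) ∧ (∀ v ∈ K, Lag u σ ≤ Lag v σ)) ∧
    IsLeast (Jp '' K) (Jp u) ∧
    Jp u = Lag u σ ∧
    Lag u σ = Jd σ ∧
    IsGreatest (Jd '' M) (Jd σ) := by
  -- weak duality identity
  have key : ∀ v ∈ K, ∀ τ ∈ M, Jp v - Jd τ = (1 / 2) * ‖L v + R τ‖ ^ 2 := by
    intro v hv τ hτ
    have h1 := hcompat v hv τ hτ
    have hn : ‖L v + R τ‖ ^ 2
        = ‖L v‖ ^ 2 + 2 * (inner ℝ (L v) (R τ) : ℝ) + ‖R τ‖ ^ 2 :=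
      norm_add_sq_real _ _
    rw [hJp, hJd, ha, hb, real_inner_self_eq_norm_sq, real_inner_self_eq_norm_sq, hn, h1]
    ring
  -- σ maximizes Jd on M
  have hmax : ∀ τ ∈ M, Jd τ ≤ Jd σ := by
    intro τ hτ
    have hmem : σ - τ ∈ S₀₀ := by
      rw [hM] at hσ hτ
      have := S₀₀.sub_mem hσ hτ
      simpa using this
    have hw := hσweak (σ - τ) hmem
    rw [hb, map_sub, inner_sub_right, map_sub] at hw
    rw [real_inner_self_eq_norm_sq] at hw
    have hns : ‖R σ - R τ‖ ^ 2
        = ‖R σ‖ ^ 2 - 2 * (inner ℝ (R σ) (R τ) : ℝ) + ‖R τ‖ ^ 2 :=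
      norm_sub_sq_real _ _
    have hnn : (0:ℝ) ≤ ‖R σ - R τ‖ ^ 2 := sq_nonneg _
    rw [hJd, hJd, hb, hb, real_inner_self_eq_norm_sq, real_inner_self_eq_norm_sq]
    nlinarith [hw, hns, hnn]
  obtain ⟨σbar, hσbarM, hσbarR⟩ := hexact
  have h0 : Jp u - Jd σbar = 0 := by
    rw [key u hu σbar hσbarM, hσbarR]; simp
  have h1 : Jp u - Jd σ = (1 / 2) * ‖L u + R σ‖ ^ 2 := key u hu σ hσ
  have hge : 0 ≤ Jp u - Jd σ := by rw [h1]; positivity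
  have heq : Jp u = Jd σ := by linarith [hmax σbar hσbarM]
  have hLagJd : ∀ v ∈ K, ∀ τ ∈ M, Lag v τ = Jd τ := by
    intro v hv τ hτ
    rw [hLag]
    linarith [key v hv τ hτ]
  refine ⟨⟨?_, ?_⟩, ⟨⟨u, hu, rfl⟩, ?_⟩, ?_, ?_, ⟨⟨σ, hσ, rfl⟩, ?_⟩⟩
  · intro τ hτ
    rw [hLagJd u hu τ hτ, hLagJd u hu σ hσ]
    exact hmax τ hτ
  · intro v hv
    rw [hLagJd u hu σ hσ, hLagJd v hv σ hσ]
  · rintro x ⟨v, hv, rfl⟩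
    have := key v hv σ hσ
    nlinarith [sq_nonneg ‖L v + R σ‖]
  · rw [hLagJd u hu σ hσ]; exact heq
  · exact hLagJd u hu σ hσ
  · rintro x ⟨τ, hτ, rfl⟩
    exact hmax τ hτ
end

section
/- Let V₀ₕ ⊆ V₀ and Σ₀₀ₕ ⊆ Σ₀₀ be linear subspaces, let u ∈ K be a weak primal solution and σ ∈ M a weak dual solution, and let uₕ = u_g + u₀ₕ with u₀ₕ ∈ V₀ₕ satisfying a(uₕ, v) = φ(v) for all v ∈ V₀ₕ, and σₕ = σ_fg + σ₀₀ₕ with σ₀₀ₕ ∈ Σ₀₀ₕ satisfying b(σₕ, τ) = ψ(τ) for all τ ∈ Σ₀₀ₕ (the primal and dual Galerkin solutions). Then the combined best approximation identity with constant one holds: |||(u − uₕ, σ − σₕ)|||_c = inf over (v,τ) ∈ V₀ₕ × Σ₀₀ₕ of |||(u − u_g − v, σ − σ_fg − τ)|||_c. -/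
/-- combined best approximation identity with constant one for
the primal and dual Galerkin solutions in the combined energy seminorm
`|||(v,τ)|||_c = (‖Λ̃ v‖² + ‖R τ‖²)^{1/2}`:
`|||(u − uₕ, σ − σₕ)|||_c = inf_{(v,τ) ∈ V₀ₕ × Σ₀₀ₕ} |||(u − u_g − v, σ − σ_fg − τ)|||_c`. -/
theorem combined_best_approximation {V S H : Type*}
    [AddCommGroup V] [Module ℝ V] [AddCommGroup S] [Module ℝ S]
    [NormedAddCommGroup H] [InnerProductSpace ℝ H]
    (L : V →ₗ[ℝ] H) (R : S →ₗ[ℝ] H)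
    (a : V → V → ℝ) (ha : ∀ v w : V, a v w = (inner ℝ (L v) (L w) : ℝ))
    (b : S → S → ℝ) (hb : ∀ ρ τ : S, b ρ τ = (inner ℝ (R ρ) (R τ) : ℝ))
    (φ : V →ₗ[ℝ] ℝ) (ψ : S →ₗ[ℝ] ℝ)
    (V₀ : Submodule ℝ V) (S₀₀ : Submodule ℝ S) (u_g : V) (σ_fg : S)
    (K : Set V) (hK : K = {v : V | v - u_g ∈ V₀})
    (M : Set S) (hM : M = {τ : S | τ - σ_fg ∈ S₀₀})
    (V₀h : Submodule ℝ V) (hVh : V₀h ≤ V₀)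
    (S₀₀h : Submodule ℝ S) (hSh : S₀₀h ≤ S₀₀)
    (u : V) (hu : u ∈ K) (huweak : ∀ w ∈ V₀, a u w = φ w)
    (σ : S) (hσ : σ ∈ M) (hσweak : ∀ τ ∈ S₀₀, b σ τ = ψ τ)
    (u₀h : V) (hu₀h : u₀h ∈ V₀h)
    (hugal : ∀ v ∈ V₀h, a (u_g + u₀h) v = φ v)
    (σ₀₀h : S) (hσ₀₀h : σ₀₀h ∈ S₀₀h)
    (hσgal : ∀ τ ∈ S₀₀h, b (σ_fg + σ₀₀h) τ = ψ τ) :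
    IsLeast
      {x : ℝ | ∃ v ∈ V₀h, ∃ τ ∈ S₀₀h,
        x = Real.sqrt (‖L (u - u_g - v)‖ ^ 2 + ‖R (σ - σ_fg - τ)‖ ^ 2)}
      (Real.sqrt (‖L (u - (u_g + u₀h))‖ ^ 2 + ‖R (σ - (σ_fg + σ₀₀h))‖ ^ 2)) := by

  constructor
  · exact ⟨u₀h, hu₀h, σ₀₀h, hσ₀₀h, by rw [sub_add_eq_sub_sub, sub_add_eq_sub_sub]⟩
  · rintro x ⟨v, hv, τ, hτ, rfl⟩
    apply Real.sqrt_le_sqrt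
    have horthL : ∀ w ∈ V₀h, (inner ℝ (L (u - (u_g + u₀h))) (L w) : ℝ) = 0 := by
      intro w hw
      have h1 := huweak w (hVh hw)
      have h2 := hugal w hw
      rw [ha] at h1 h2
      simp only [map_sub, inner_sub_left]
      linarith
    have horthR : ∀ w ∈ S₀₀h, (inner ℝ (R (σ - (σ_fg + σ₀₀h))) (R w) : ℝ) = 0 := by
      intro w hw
      have h1 := hσweak w (hSh hw)
      have h2 := hσgal w hw
      rw [hb] at h1 h2
      simp only [map_sub, inner_sub_left]
      linarith
    have e1 : u - u_g - v = (u - (u_g + u₀h)) + (u₀h - v) := by abel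
    have e2 : σ - σ_fg - τ = (σ - (σ_fg + σ₀₀h)) + (σ₀₀h - τ) := by abel
    have n1 : ‖L (u - (u_g + u₀h))‖ ^ 2 ≤ ‖L (u - u_g - v)‖ ^ 2 := by
      rw [e1, map_add, norm_add_sq_real,
        horthL _ (sub_mem hu₀h hv)]
      nlinarith [sq_nonneg ‖L (u₀h - v)‖]
    have n2 : ‖R (σ - (σ_fg + σ₀₀h))‖ ^ 2 ≤ ‖R (σ - σ_fg - τ)‖ ^ 2 := by
      rw [e2, map_add, norm_add_sq_real,
        horthR _ (sub_mem hσ₀₀h hτ)]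
      nlinarith [sq_nonneg ‖R (σ₀₀h - τ)‖]
    linarith
end
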